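/- Let f : I ⊆ ℝ → ℝ be differentiable on I° with f' integrable on [a,b], where a, b ∈ I° with a < b, and let q ≥ 1. Suppose |f'|^q is a P-function on [a,b]. Then the following midpoint inequality holds: |f((a+b)/2) - (1/(b-a)) ∫_a^b f(x) dx| ≤ ((b-a)/4)(|f'(b)|^q + |f'(a)|^q)^{1/q}. -/

import Mathlib

open MeasureTheory Set Real

/-- `g` is a `P`-function on the set `s`: it is nonnegative on `s` and
`g (t*x + (1-t)*y) ≤ g x + g y` for all `x, y ∈ s` and `t ∈ [0,1]`. -/
def IsPFunctionOn (g : ℝ → ℝ) (s : Set ℝ) : Prop :=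
  (∀ x ∈ s, 0 ≤ g x) ∧
    ∀ x ∈ s, ∀ y ∈ s, ∀ t ∈ Set.Icc (0:ℝ) 1, g (t * x + (1 - t) * y) ≤ g x + g y

theorem stmt_5 (I : Set ℝ) (hI : Convex ℝ I) (f f' : ℝ → ℝ)
    (a b : ℝ) (ha : a ∈ interior I) (hb : b ∈ interior I) (hab : a < b)
    (hdf : ∀ x ∈ interior I, HasDerivAt f (f' x) x)
    (hint : IntervalIntegrable f' MeasureTheory.volume a b)
    (q : ℝ) (hq : 1 ≤ q)
    (hP : IsPFunctionOn (fun x => |f' x| ^ q) (Set.Icc a b)) :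
    |f ((a + b) / 2) - (1 / (b - a)) * ∫ x in a..b, f x|
      ≤ ((b - a) / 4) * (|f' b| ^ q + |f' a| ^ q) ^ (1 / q) := by
  set c : ℝ := (a + b) / 2 with hc
  set M : ℝ := (|f' b| ^ q + |f' a| ^ q) ^ (1 / q) with hM
  have hq0 : q ≠ 0 := by linarith
  have hba : (0:ℝ) < b - a := by linarith
  have hIcc : Set.Icc a b ⊆ interior I := by
    rw [← segment_eq_Icc hab.le]
    exact hI.interior.segment_subset ha hb
  have hM0 : 0 ≤ M := by
    apply Real.rpow_nonneg
    positivity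
  -- pointwise bound on |f'|
  have hbound : ∀ x ∈ Set.Icc a b, |f' x| ≤ M := by
    intro x hx
    set t : ℝ := (x - a) / (b - a) with ht
    have ht01 : t ∈ Set.Icc (0:ℝ) 1 := by
      constructor
      · apply div_nonneg (by linarith [hx.1]) hba.le
      · rw [div_le_one hba]; linarith [hx.2]
    have hxt : t * b + (1 - t) * a = x := by
      have h' : t * (b - a) = x - a := by rw [ht]; exact div_mul_cancel₀ _ hba.ne'
      linear_combination h'
    have h := hP.2 b (by constructor <;> linarith) a (by constructor <;> linarith) t ht01
    rw [hxt] at h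
    calc |f' x| = (|f' x| ^ q) ^ (1 / q) := by
          rw [one_div, Real.rpow_rpow_inv (abs_nonneg _) hq0]
      _ ≤ M := by
          apply Real.rpow_le_rpow (by positivity) h (by positivity)
  -- Lipschitz bound
  have hlip : ∀ x ∈ Set.Icc a b, |f c - f x| ≤ M * |c - x| := by
    intro x hx
    have hc_mem : c ∈ Set.Icc a b := by
      constructor <;> (simp only [hc]; linarith)
    exact Convex.norm_image_sub_le_of_norm_hasDerivWithin_le
      (fun y hy => ((hdf y (hIcc hy)).hasDerivWithinAt))
      (fun y hy => hbound y hy) (convex_Icc a b) hx hc_mem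
  -- integrability of f
  have hfc : ContinuousOn f (Set.Icc a b) :=
    fun x hx => ((hdf x (hIcc hx)).continuousAt).continuousWithinAt
  have hfint : IntervalIntegrable f volume a b := by
    apply ContinuousOn.intervalIntegrable
    rwa [Set.uIcc_of_le hab.le]
  -- key identity
  have hconst : IntervalIntegrable (fun _ : ℝ => f c) volume a b :=
    intervalIntegrable_const
  have hid : (∫ x in a..b, (f c - f x)) = (b - a) * f c - ∫ x in a..b, f x := by
    rw [intervalIntegral.integral_sub hconst hfint, intervalIntegral.integral_const]
    simp [smul_eq_mul]
  have hrw : f c - (1 / (b - a)) * ∫ x in a..b, f x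
      = (1 / (b - a)) * ∫ x in a..b, (f c - f x) := by
    rw [hid]
    field_simp
  -- integral of |c - x|
  have habs : (∫ x in a..b, |c - x|) = (b - a) ^ 2 / 4 := by
    have h1 : (∫ x in a..c, |c - x|) = (c - a) ^ 2 / 2 := by
      rw [intervalIntegral.integral_congr (g := fun x => c - x)]
      · rw [intervalIntegral.integral_sub intervalIntegrable_const
          intervalIntegral.intervalIntegrable_id, intervalIntegral.integral_const,
          integral_id]
        simp [smul_eq_mul]; ring
      · intro x hx
        rw [Set.uIcc_of_le (by simp only [hc]; linarith)] at hx
        show |c - x| = c - x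
        exact abs_of_nonneg (by linarith [hx.2])
    have h2 : (∫ x in c..b, |c - x|) = (b - c) ^ 2 / 2 := by
      rw [intervalIntegral.integral_congr (g := fun x => x - c)]
      · rw [intervalIntegral.integral_sub intervalIntegral.intervalIntegrable_id
          intervalIntegrable_const, intervalIntegral.integral_const,
          integral_id]
        simp [smul_eq_mul]; ring
      · intro x hx
        rw [Set.uIcc_of_le (by simp only [hc]; linarith)] at hx
        show |c - x| = x - c
        rw [abs_sub_comm]
        exact abs_of_nonneg (by linarith [hx.1])
    have := intervalIntegral.integral_add_adjacent_intervals
      (a := a) (b := c) (c := b) (f := fun x => |c - x|) (μ := volume)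
      ((continuous_const.sub continuous_id).abs.intervalIntegrable _ _)
      ((continuous_const.sub continuous_id).abs.intervalIntegrable _ _)
    rw [← this, h1, h2, hc]
    ring
  -- integrability of the comparison functions
  have hint1 : IntervalIntegrable (fun x => |f c - f x|) volume a b := by
    apply ContinuousOn.intervalIntegrable
    rw [Set.uIcc_of_le hab.le]
    exact (continuousOn_const.sub hfc).abs
  have hint2 : IntervalIntegrable (fun x => M * |c - x|) volume a b :=
    (continuous_const.mul (continuous_const.sub continuous_id).abs).intervalIntegrable _ _
  -- put it all together
  rw [hrw, abs_mul, abs_of_nonneg (by positivity : (0:ℝ) ≤ 1 / (b - a))]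
  have hstep : |∫ x in a..b, (f c - f x)| ≤ M * ((b - a) ^ 2 / 4) := by
    calc |∫ x in a..b, (f c - f x)| ≤ ∫ x in a..b, |f c - f x| :=
          intervalIntegral.abs_integral_le_integral_abs hab.le
      _ ≤ ∫ x in a..b, M * |c - x| := by
          apply intervalIntegral.integral_mono_on hab.le hint1 hint2
          intro x hx
          exact hlip x hx
      _ = M * ((b - a) ^ 2 / 4) := by
          rw [intervalIntegral.integral_const_mul, habs]
  calc (1 / (b - a)) * |∫ x in a..b, (f c - f x)|
      ≤ (1 / (b - a)) * (M * ((b - a) ^ 2 / 4)) := by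
        apply mul_le_mul_of_nonneg_left hstep (by positivity)
    _ = ((b - a) / 4) * M := by field_simp
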